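/- The admissible state set G = { U = (ρ, m, B, E) : ρ > 0 and E - (|m|²/ρ + |B|²)/2 > 0 } is a convex subset of ℝ⁸. -/

import Mathlib

lemma key_div (p q x y : ℝ) (hp : 0 < p) (hq : 0 < q) :
    (x + y) ^ 2 / (p + q) ≤ x ^ 2 / p + y ^ 2 / q := by
  rw [div_add_div _ _ hp.ne' hq.ne', div_le_div_iff₀ (by positivity) (by positivity)]
  nlinarith [sq_nonneg (x * q - y * p), mul_pos hp hq, hp.le, hq.le]

/-- The admissible state set
G = { U = (ρ, m, B, E) : ρ > 0 and E - (|m|²/ρ + |B|²)/2 > 0 } is convex. -/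
theorem admissible_set_convex :
    Convex ℝ {U : ℝ × (Fin 3 → ℝ) × (Fin 3 → ℝ) × ℝ |
      0 < U.1 ∧ 0 < U.2.2.2 - ((∑ i, (U.2.1 i) ^ 2) / U.1 + ∑ i, (U.2.2.1 i) ^ 2) / 2} := by
  rintro ⟨ρ₁, m₁, B₁, E₁⟩ ⟨hρ₁, hE₁⟩ ⟨ρ₂, m₂, B₂, E₂⟩ ⟨hρ₂, hE₂⟩ a b ha hb hab
  rcases ha.eq_or_lt' with rfl | ha'
  · have hb1 : b = 1 := by linarith
    subst hb1
    simpa using And.intro hρ₂ hE₂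
  rcases hb.eq_or_lt' with rfl | hb'
  · have ha1 : a = 1 := by linarith
    subst ha1
    simpa using And.intro hρ₁ hE₁
  have hρ : 0 < a * ρ₁ + b * ρ₂ := by positivity
  refine ⟨hρ, ?_⟩
  simp only [Prod.smul_fst, Prod.smul_snd, Prod.fst_add, Prod.snd_add, smul_eq_mul,
    Pi.add_apply, Pi.smul_apply]
  have hm : (∑ i, (a * m₁ i + b * m₂ i) ^ 2) / (a * ρ₁ + b * ρ₂)
      ≤ a * ((∑ i, (m₁ i) ^ 2) / ρ₁) + b * ((∑ i, (m₂ i) ^ 2) / ρ₂) := by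
    rw [Finset.sum_div]
    have : ∀ i ∈ Finset.univ, (a * m₁ i + b * m₂ i) ^ 2 / (a * ρ₁ + b * ρ₂)
        ≤ a * ((m₁ i) ^ 2 / ρ₁) + b * ((m₂ i) ^ 2 / ρ₂) := by
      intro i _
      have h := key_div (a * ρ₁) (b * ρ₂) (a * m₁ i) (b * m₂ i)
        (by positivity) (by positivity)
      have e1 : (a * m₁ i) ^ 2 / (a * ρ₁) = a * ((m₁ i) ^ 2 / ρ₁) := by
        field_simp
      have e2 : (b * m₂ i) ^ 2 / (b * ρ₂) = b * ((m₂ i) ^ 2 / ρ₂) := by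
        field_simp
      rw [e1, e2] at h
      exact h
    calc ∑ i, (a * m₁ i + b * m₂ i) ^ 2 / (a * ρ₁ + b * ρ₂)
        ≤ ∑ i, (a * ((m₁ i) ^ 2 / ρ₁) + b * ((m₂ i) ^ 2 / ρ₂)) := Finset.sum_le_sum this
      _ = a * ((∑ i, (m₁ i) ^ 2) / ρ₁) + b * ((∑ i, (m₂ i) ^ 2) / ρ₂) := by
          rw [Finset.sum_add_distrib, ← Finset.mul_sum, ← Finset.mul_sum,
            Finset.sum_div, Finset.sum_div]
  have hB : (∑ i, (a * B₁ i + b * B₂ i) ^ 2) ≤ a * ∑ i, (B₁ i) ^ 2 + b * ∑ i, (B₂ i) ^ 2 := by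
    calc ∑ i, (a * B₁ i + b * B₂ i) ^ 2
        ≤ ∑ i, (a * (B₁ i) ^ 2 + b * (B₂ i) ^ 2) := by
          refine Finset.sum_le_sum fun i _ => ?_
          nlinarith [sq_nonneg (B₁ i - B₂ i), mul_nonneg ha hb]
      _ = a * ∑ i, (B₁ i) ^ 2 + b * ∑ i, (B₂ i) ^ 2 := by
          rw [Finset.sum_add_distrib, ← Finset.mul_sum, ← Finset.mul_sum]
  have h1 := mul_pos ha' hE₁
  have h2 := mul_pos hb' hE₂
  nlinarith [hm, hB]
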